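/- Let n ≥ 1 and let N_{ij}^k (for i, j, k ∈ {0,…,n−1}) be nonnegative real numbers, and let d_0,…,d_{n−1} be strictly positive real numbers satisfying d_i·d_j = Σ_k N_{ij}^k·d_k for all i, j. For each i, let N_i denote the n×n matrix with (j,k) entry N_{ij}^k, regarded as a complex matrix. If v ∈ ℂⁿ is a nonzero vector that is a simultaneous eigenvector of all the matrices N_i, say N_i·v = μ_i·v with μ_i ∈ ℂ, then for every i one has |⟨v, N_i·v⟩| ≤ d_i·⟨v, v⟩, where ⟨·,·⟩ denotes the standard Hermitian inner product on ℂⁿ. -/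

import Mathlib

/-- For a simultaneous eigenvector `v` of all fusion matrices `N_i`, the matrix element
`⟨v, N_i v⟩` is bounded by `d i * ⟨v, v⟩`. -/
theorem stmt_2 (n : ℕ) (hn : 1 ≤ n) (N : Fin n → Fin n → Fin n → ℝ)
    (hN : ∀ i j k, 0 ≤ N i j k)
    (d : Fin n → ℝ) (hd : ∀ i, 0 < d i)
    (hfus : ∀ i j, d i * d j = ∑ k, N i j k * d k)
    (v : Fin n → ℂ) (hv : v ≠ 0) (μ : Fin n → ℂ)
    (heig : ∀ i, ((Matrix.of fun j k => N i j k).map (fun a => (a : ℂ))).mulVec v = μ i • v)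
    (i : Fin n) :
    ‖(dotProduct (star v)
          (((Matrix.of fun j k => N i j k).map (fun a => (a : ℂ))).mulVec v))‖
      ≤ d i * ∑ j, Complex.normSq (v j) := by
  -- Step 1: |μ i| ≤ d i
  have hμ : ‖μ i‖ ≤ d i := by
    obtain ⟨j, -, hj⟩ := Finset.exists_max_image Finset.univ
      (fun k => ‖v k‖ / d k) ⟨⟨0, hn⟩, Finset.mem_univ _⟩
    have hmax : ∀ k, ‖v k‖ / d k ≤ ‖v j‖ / d j :=
      fun k => hj k (Finset.mem_univ k)
    have hvj : 0 < ‖v j‖ := by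
      obtain ⟨k, hk⟩ := Function.ne_iff.mp hv
      have h1 : 0 < ‖v k‖ / d k :=
        div_pos (by simpa using hk) (hd k)
      have h2 := lt_of_lt_of_le h1 (hmax k)
      rcases div_pos_iff.mp h2 with ⟨h, _⟩ | ⟨_, h⟩
      · exact h
      · linarith [hd j]
    have heq : ∑ k, (N i j k : ℂ) * v k = μ i * v j := by
      have := congrFun (heig i) j
      simpa [Matrix.mulVec, dotProduct, Matrix.map] using this
    have key : ‖μ i‖ * ‖v j‖ ≤ d i * ‖v j‖ := by
      calc ‖μ i‖ * ‖v j‖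
          = ‖∑ k, (N i j k : ℂ) * v k‖ := by rw [heq, norm_mul]
        _ ≤ ∑ k, ‖(N i j k : ℂ) * v k‖ := norm_sum_le _ _
        _ = ∑ k, N i j k * ‖v k‖ := by
            refine Finset.sum_congr rfl fun k _ => ?_
            rw [norm_mul, Complex.norm_real, Real.norm_eq_abs, abs_of_nonneg (hN i j k)]
        _ ≤ ∑ k, N i j k * (d k * (‖v j‖ / d j)) := by
            refine Finset.sum_le_sum fun k _ => ?_
            refine mul_le_mul_of_nonneg_left ?_ (hN i j k)
            calc ‖v k‖ = (‖v k‖ / d k) * d k :=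
                  (div_mul_cancel₀ _ (hd k).ne').symm
              _ ≤ (‖v j‖ / d j) * d k :=
                  mul_le_mul_of_nonneg_right (hj k (Finset.mem_univ k)) (hd k).le
              _ = d k * (‖v j‖ / d j) := mul_comm _ _
        _ = (∑ k, N i j k * d k) * (‖v j‖ / d j) := by
            rw [Finset.sum_mul]
            exact Finset.sum_congr rfl fun k _ => by ring
        _ = d i * ‖v j‖ := by
            have hdj : d j ≠ 0 := (hd j).ne'
            field_simp
            rw [← hfus i j]; ring
    exact le_of_mul_le_mul_right key hvj
  -- Step 2: compute the matrix element
  rw [heig i]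
  have hdot : dotProduct (star v) (μ i • v)
      = μ i * ((∑ j, Complex.normSq (v j) : ℝ) : ℂ) := by
    simp only [dotProduct, Pi.smul_apply, Pi.star_apply, smul_eq_mul]
    push_cast
    rw [Finset.mul_sum]
    refine Finset.sum_congr rfl fun j _ => ?_
    rw [Complex.normSq_eq_conj_mul_self, Complex.star_def]
    ring
  rw [hdot, norm_mul, Complex.norm_real, Real.norm_eq_abs,
    abs_of_nonneg (Finset.sum_nonneg fun j _ => Complex.normSq_nonneg _)]
  exact mul_le_mul_of_nonneg_right hμ
    (Finset.sum_nonneg fun j _ => Complex.normSq_nonneg _)
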